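/- Suppose the observability matrix 𝒪̃ of a linear quantum system factors as 𝒪̃ = Q E Z^{-1} with Q invertible, Z real symplectic, and E the one-sided symplectic SVD canonical form, and suppose the controllability matrix satisfies 𝒞̃ = 𝒪̃^♯ T₀ for some symplectic T₀. Then after the state transformation with V = Z^{-1}, the transformed observability matrix is Q E and the transformed controllability matrix is E^♯ Q^♯ T₀; consequently the unobservable subspace is Ker E = span{e_{k+l+1},...,e_n, e_{n+k+1},...,e_{2n}} and the controllable subspace is Im E^♯ = span{e₁,...,e_k, e_{n+1},...,e_{n+k+l}}. -/

import Mathlib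

open Matrix

/-- `J_{2k} = [[0, I_k], [-I_k, 0]]` as a `2k × 2k` real matrix. -/
noncomputable def JR (k : ℕ) : Matrix (Fin (2*k)) (Fin (2*k)) ℝ :=
  Matrix.of fun i j => if (j:ℕ) = (i:ℕ) + k then 1 else if (i:ℕ) = (j:ℕ) + k then -1 else 0

/-- The ♯-adjoint of a real `2r × 2s` matrix: `X^♯ = -J_{2s} X^⊤ J_{2r}`
(for real matrices `X^† = X^⊤`). -/
noncomputable def sharpR {r s : ℕ} (X : Matrix (Fin (2*r)) (Fin (2*s)) ℝ) :
    Matrix (Fin (2*s)) (Fin (2*r)) ℝ :=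
  -(JR s) * Xᵀ * (JR r)

/-- The canonical form `E` of the one-sided symplectic SVD: nonzero blocks
`Ξ_k = diag(ξ₁,…,ξ_k)` in rows `1..k`, columns `1..k`; `I_l` in rows `k+1..k+l`,
columns `k+1..k+l`; `Ξ_k` in rows `k+l+1..2k+l`, columns `n+1..n+k`; zeros elsewhere. -/
noncomputable def Ecan (s n k l : ℕ) (ξ : Fin k → ℝ) : Matrix (Fin s) (Fin (2*n)) ℝ :=
  Matrix.of fun i j =>
    if h : (i : ℕ) < k ∧ (j : ℕ) = (i : ℕ) then ξ ⟨i, h.1⟩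
    else if k ≤ (i : ℕ) ∧ (i : ℕ) < k + l ∧ (j : ℕ) = (i : ℕ) then 1
    else if h2 : k + l ≤ (i : ℕ) ∧ (i : ℕ) < 2*k + l ∧ (j : ℕ) = n + ((i : ℕ) - (k + l)) then
      ξ ⟨(i : ℕ) - (k + l), by omega⟩
    else 0

section Helpers

set_option linter.unreachableTactic false
set_option linter.unusedTactic false

lemma JR_mul_apply {k : ℕ} {ι : Type*} (X : Matrix (Fin (2*k)) ι ℝ) (i : Fin (2*k)) (j : ι) :
    (JR k * X) i j = if h : (i:ℕ) < k then X ⟨(i:ℕ)+k, by omega⟩ j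
      else -X ⟨(i:ℕ)-k, by have := i.2; omega⟩ j := by
  rw [Matrix.mul_apply]
  have hi := i.2
  by_cases h : (i:ℕ) < k
  · rw [dif_pos h, Finset.sum_eq_single (⟨(i:ℕ)+k, by omega⟩ : Fin (2*k))]
    · simp only [JR, Matrix.of_apply]
      split_ifs <;> first | omega | ring1 | (exfalso; omega)
    · intro b _ hb
      have hb' : (b:ℕ) ≠ (i:ℕ)+k := fun hc => hb (Fin.ext hc)
      simp only [JR, Matrix.of_apply]
      split_ifs <;> first | omega | ring1 | (exfalso; omega)
    · simp
  · rw [dif_neg h, Finset.sum_eq_single (⟨(i:ℕ)-k, by omega⟩ : Fin (2*k))]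
    · simp only [JR, Matrix.of_apply]
      split_ifs <;> first | omega | ring1 | (exfalso; omega)
    · intro b _ hb
      have hb' : (b:ℕ) ≠ (i:ℕ)-k := fun hc => hb (Fin.ext hc)
      simp only [JR, Matrix.of_apply]
      split_ifs <;> first | omega | ring1 | (exfalso; omega)
    · simp

lemma mul_JR_apply {k : ℕ} {ι : Type*} [Fintype ι] (X : Matrix ι (Fin (2*k)) ℝ) (i : ι)
    (j : Fin (2*k)) :
    (X * JR k) i j = if h : (j:ℕ) < k then -X i ⟨(j:ℕ)+k, by omega⟩
      else X i ⟨(j:ℕ)-k, by have := j.2; omega⟩ := by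
  rw [Matrix.mul_apply]
  have hj := j.2
  by_cases h : (j:ℕ) < k
  · rw [dif_pos h, Finset.sum_eq_single (⟨(j:ℕ)+k, by omega⟩ : Fin (2*k))]
    · simp only [JR, Matrix.of_apply]
      split_ifs <;> first | omega | ring1 | (exfalso; omega)
    · intro b _ hb
      have hb' : (b:ℕ) ≠ (j:ℕ)+k := fun hc => hb (Fin.ext hc)
      simp only [JR, Matrix.of_apply]
      split_ifs <;> first | omega | ring1 | (exfalso; omega)
    · simp
  · rw [dif_neg h, Finset.sum_eq_single (⟨(j:ℕ)-k, by omega⟩ : Fin (2*k))]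
    · simp only [JR, Matrix.of_apply]
      split_ifs <;> first | omega | ring1 | (exfalso; omega)
    · intro b _ hb
      have hb' : (b:ℕ) ≠ (j:ℕ)-k := fun hc => hb (Fin.ext hc)
      simp only [JR, Matrix.of_apply]
      split_ifs <;> first | omega | ring1 | (exfalso; omega)
    · simp

lemma JR_mul_JR (k : ℕ) : JR k * JR k = -1 := by
  ext i j
  rw [JR_mul_apply]
  have hi := i.2
  have hj := j.2
  simp only [JR, Matrix.of_apply, Matrix.neg_apply, Matrix.one_apply, Fin.ext_iff]
  split_ifs <;> first | omega | ring1 | (exfalso; omega)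

lemma neg_JR_mul_JR (k : ℕ) : (-(JR k)) * JR k = 1 := by
  rw [Matrix.neg_mul, JR_mul_JR]; simp

lemma JR_mul_neg_JR (k : ℕ) : JR k * (-(JR k)) = 1 :=
  mul_eq_one_comm.mp (neg_JR_mul_JR k)

lemma isUnit_JR (k : ℕ) : IsUnit (JR k) :=
  ⟨⟨JR k, -(JR k), JR_mul_neg_JR k, neg_JR_mul_JR k⟩, rfl⟩

lemma isUnit_neg_JR (k : ℕ) : IsUnit (-(JR k)) :=
  ⟨⟨-(JR k), JR k, neg_JR_mul_JR k, JR_mul_neg_JR k⟩, rfl⟩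

lemma isUnit_of_symp {p : ℕ} (T : Matrix (Fin (2*p)) (Fin (2*p)) ℝ)
    (hT : T * JR p * Tᵀ = JR p) : IsUnit T := by
  have h1 : T * (JR p * Tᵀ * (-(JR p))) = 1 := by
    calc T * (JR p * Tᵀ * (-(JR p))) = (T * JR p * Tᵀ) * (-(JR p)) := by
          simp only [Matrix.mul_assoc]
      _ = JR p * (-(JR p)) := by rw [hT]
      _ = 1 := JR_mul_neg_JR p
  exact ⟨⟨T, _, h1, mul_eq_one_comm.mp h1⟩, rfl⟩

lemma sharpR_apply {r s : ℕ} (X : Matrix (Fin (2*r)) (Fin (2*s)) ℝ)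
    (j : Fin (2*s)) (c : Fin (2*r)) :
    sharpR X j c =
      if hj : (j:ℕ) < s then
        (if hc : (c:ℕ) < r then X ⟨(c:ℕ)+r, by omega⟩ ⟨(j:ℕ)+s, by omega⟩
         else -X ⟨(c:ℕ)-r, by have := c.2; omega⟩ ⟨(j:ℕ)+s, by omega⟩)
      else
        (if hc : (c:ℕ) < r then -X ⟨(c:ℕ)+r, by omega⟩ ⟨(j:ℕ)-s, by have := j.2; omega⟩
         else X ⟨(c:ℕ)-r, by have := c.2; omega⟩ ⟨(j:ℕ)-s, by have := j.2; omega⟩) := by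
  have hrw : sharpR X = -(JR s * (Xᵀ * JR r)) := by
    rw [sharpR, Matrix.neg_mul, Matrix.neg_mul, Matrix.mul_assoc]
  rw [hrw, Matrix.neg_apply, JR_mul_apply]
  by_cases hj : (j:ℕ) < s
  · rw [dif_pos hj, mul_JR_apply]
    by_cases hc : (c:ℕ) < r
    · rw [dif_pos hc, dif_pos hj, dif_pos hc]
      simp [Matrix.transpose_apply]
    · rw [dif_neg hc, dif_pos hj, dif_neg hc]
      simp [Matrix.transpose_apply]
  · rw [dif_neg hj, neg_neg, mul_JR_apply]
    by_cases hc : (c:ℕ) < r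
    · rw [dif_pos hc, dif_neg hj, dif_pos hc]
      simp [Matrix.transpose_apply]
    · rw [dif_neg hc, dif_neg hj, dif_neg hc]
      simp [Matrix.transpose_apply]

lemma Ecan_col_zero {s n k l : ℕ} (ξ : Fin k → ℝ) (hkl : k + l ≤ n)
    (i : Fin s) (a : Fin (2*n)) (ha : (k + l ≤ (a:ℕ) ∧ (a:ℕ) < n) ∨ n + k ≤ (a:ℕ)) :
    Ecan s n k l ξ i a = 0 := by
  have h2 := a.2
  simp only [Ecan, Matrix.of_apply]
  split_ifs <;> first | rfl | (exfalso; omega)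

lemma mem_span_single_iff {N : ℕ} (P : Set (Fin N)) (v : Fin N → ℝ) :
    v ∈ Submodule.span ℝ ((fun i : Fin N => (Pi.single i 1 : Fin N → ℝ)) '' P) ↔
      ∀ j ∉ P, v j = 0 := by
  constructor
  · intro hv
    refine Submodule.span_induction ?_ ?_ ?_ ?_ hv
    · rintro x ⟨i, hi, rfl⟩ j hj
      exact Pi.single_eq_of_ne (fun hc => hj (by rw [hc]; exact hi)) 1
    · intro j _; rfl
    · intro x y _ _ hx hy j hj
      simp [hx j hj, hy j hj]
    · intro a x _ hx j hj
      simp [hx j hj]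
  · intro hv
    have : v = ∑ j : Fin N, v j • (Pi.single j 1 : Fin N → ℝ) := by
      simp_rw [← Pi.single_smul, smul_eq_mul, mul_one]
      exact (Finset.univ_sum_single v).symm
    rw [this]
    refine Submodule.sum_mem _ fun j _ => ?_
    by_cases hj : j ∈ P
    · exact Submodule.smul_mem _ _ (Submodule.subset_span ⟨j, hj, rfl⟩)
    · rw [hv j hj]; simp

lemma Ecan_mulVec {s n k l : ℕ} (ξ : Fin k → ℝ) (hkl : k + l ≤ n)
    (v : Fin (2*n) → ℝ) (i : Fin s) :
    (Ecan s n k l ξ).mulVec v i =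
      if h : (i:ℕ) < k then ξ ⟨i, h⟩ * v ⟨i, by omega⟩
      else if h2 : (i:ℕ) < k + l then v ⟨i, by omega⟩
      else if h3 : (i:ℕ) < 2*k + l then
        ξ ⟨(i:ℕ) - (k+l), by omega⟩ * v ⟨n + ((i:ℕ) - (k+l)), by omega⟩
      else 0 := by
  rw [Matrix.mulVec, dotProduct]
  by_cases h : (i:ℕ) < k
  · rw [dif_pos h, Finset.sum_eq_single (⟨(i:ℕ), by omega⟩ : Fin (2*n))]
    · simp only [Ecan, Matrix.of_apply]
      split_ifs <;> (try simp only [and_true] at *) <;>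
        first | rfl | ring1 | omega | (exfalso; omega)
    · intro b _ hb
      have hb' : (b:ℕ) ≠ (i:ℕ) := fun hc => hb (Fin.ext hc)
      have hbb := b.2
      simp only [Ecan, Matrix.of_apply]
      split_ifs <;> (try simp only [and_true] at *) <;>
        first | rfl | ring1 | omega | (exfalso; omega)
    · simp
  · rw [dif_neg h]
    by_cases h2 : (i:ℕ) < k + l
    · rw [dif_pos h2, Finset.sum_eq_single (⟨(i:ℕ), by omega⟩ : Fin (2*n))]
      · simp only [Ecan, Matrix.of_apply]
        split_ifs <;> (try simp only [and_true] at *) <;>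
          first | rfl | ring1 | omega | (exfalso; omega)
      · intro b _ hb
        have hb' : (b:ℕ) ≠ (i:ℕ) := fun hc => hb (Fin.ext hc)
        have hbb := b.2
        simp only [Ecan, Matrix.of_apply]
        split_ifs <;> (try simp only [and_true] at *) <;>
          first | rfl | ring1 | omega | (exfalso; omega)
      · simp
    · rw [dif_neg h2]
      by_cases h3 : (i:ℕ) < 2*k + l
      · rw [dif_pos h3,
          Finset.sum_eq_single (⟨n + ((i:ℕ) - (k+l)), by omega⟩ : Fin (2*n))]
        · simp only [Ecan, Matrix.of_apply]
          split_ifs <;> (try simp only [and_true] at *) <;>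
            first | rfl | ring1 | omega | (exfalso; omega)
        · intro b _ hb
          have hb' : (b:ℕ) ≠ n + ((i:ℕ) - (k+l)) := fun hc => hb (Fin.ext hc)
          have hbb := b.2
          simp only [Ecan, Matrix.of_apply]
          split_ifs <;> (try simp only [and_true] at *) <;>
            first | rfl | ring1 | omega | (exfalso; omega)
        · simp
      · rw [dif_neg h3]
        refine Finset.sum_eq_zero fun b _ => ?_
        have hbb := b.2
        simp only [Ecan, Matrix.of_apply]
        split_ifs <;> (try simp only [and_true] at *) <;>
          first | rfl | ring1 | omega | (exfalso; omega)

lemma sharpR_Ecan_row_zero {S n k l : ℕ} (ξ : Fin k → ℝ) (hkl : k + l ≤ n)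
    (j : Fin (2*n)) (hj : ¬((j:ℕ) < k ∨ (n ≤ (j:ℕ) ∧ (j:ℕ) < n + k + l)))
    (c : Fin (2*S)) : sharpR (Ecan (2*S) n k l ξ) j c = 0 := by
  have hj2 := j.2
  rw [sharpR_apply]
  split_ifs <;>
    first
      | (refine Ecan_col_zero ξ hkl _ _ ?_; simp only [Fin.val_mk]; omega)
      | (refine neg_eq_zero.mpr (Ecan_col_zero ξ hkl _ _ ?_); simp only [Fin.val_mk]; omega)

lemma xi_mul_inv {k : ℕ} (ξ : Fin k → ℝ) (hξ : ∀ i, 0 < ξ i) (a b : Fin k)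
    (h : (a:ℕ) = (b:ℕ)) : ξ a * (ξ b)⁻¹ = 1 := by
  have hab : a = b := Fin.ext h
  subst hab
  exact mul_inv_cancel₀ (ne_of_gt (hξ _))

set_option maxHeartbeats 1000000 in
lemma single_mem_range {S n k l : ℕ} (ξ : Fin k → ℝ) (hξ : ∀ i, 0 < ξ i) (hkl : k + l ≤ n)
    (hs : 2*k + l ≤ 2*S) (j : Fin (2*n))
    (hj : (j:ℕ) < k ∨ (n ≤ (j:ℕ) ∧ (j:ℕ) < n + k + l)) :
    ∃ v : Fin (2*S) → ℝ, (sharpR (Ecan (2*S) n k l ξ)).mulVec v = Pi.single j 1 := by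
  have hj2 := j.2
  rcases hj with h1 | ⟨h2a, h2b⟩
  · -- j < k ; use row i0 = k+l+j of E
    by_cases hi0 : k + l + (j:ℕ) < S
    · refine ⟨Pi.single ⟨k + l + (j:ℕ) + S, by omega⟩ (-(ξ ⟨(j:ℕ), h1⟩)⁻¹), ?_⟩
      rw [Matrix.mulVec_single]
      funext j'
      have hj'2 := j'.2
      rw [Pi.smul_apply, Matrix.col_apply, op_smul_eq_mul, sharpR_apply]
      simp only [Ecan, Matrix.of_apply, Pi.single_apply, Fin.ext_iff, Fin.val_mk]
      split_ifs <;> (try simp only [and_true] at *) <;>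
        first
          | omega | (exfalso; omega) | (norm_num; done)
          | (refine xi_mul_inv ξ hξ _ _ ?_; simp only [Fin.val_mk]; try omega)
          | (rw [neg_mul_neg]; refine xi_mul_inv ξ hξ _ _ ?_; simp only [Fin.val_mk]; try omega)
    · refine ⟨Pi.single ⟨k + l + (j:ℕ) - S, by omega⟩ ((ξ ⟨(j:ℕ), h1⟩)⁻¹), ?_⟩
      rw [Matrix.mulVec_single]
      funext j'
      have hj'2 := j'.2
      rw [Pi.smul_apply, Matrix.col_apply, op_smul_eq_mul, sharpR_apply]
      simp only [Ecan, Matrix.of_apply, Pi.single_apply, Fin.ext_iff, Fin.val_mk]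
      split_ifs <;> (try simp only [and_true] at *) <;>
        first
          | omega | (exfalso; omega) | (norm_num; done)
          | (refine xi_mul_inv ξ hξ _ _ ?_; simp only [Fin.val_mk]; try omega)
  · by_cases hkj : (j:ℕ) < n + k
    · -- row i0 = j - n < k
      by_cases hi0 : (j:ℕ) - n < S
      · refine ⟨Pi.single ⟨(j:ℕ) - n + S, by omega⟩ ((ξ ⟨(j:ℕ) - n, by omega⟩)⁻¹), ?_⟩
        rw [Matrix.mulVec_single]
        funext j'
        have hj'2 := j'.2
        rw [Pi.smul_apply, Matrix.col_apply, op_smul_eq_mul, sharpR_apply]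
        simp only [Ecan, Matrix.of_apply, Pi.single_apply, Fin.ext_iff, Fin.val_mk]
        split_ifs <;> (try simp only [and_true] at *) <;>
          first
            | omega | (exfalso; omega) | (norm_num; done)
            | (refine xi_mul_inv ξ hξ _ _ ?_; simp only [Fin.val_mk]; try omega)
            | (rw [neg_mul_neg]; refine xi_mul_inv ξ hξ _ _ ?_; simp only [Fin.val_mk]; try omega)
      · refine ⟨Pi.single ⟨(j:ℕ) - n - S, by omega⟩ (-(ξ ⟨(j:ℕ) - n, by omega⟩)⁻¹), ?_⟩
        rw [Matrix.mulVec_single]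
        funext j'
        have hj'2 := j'.2
        rw [Pi.smul_apply, Matrix.col_apply, op_smul_eq_mul, sharpR_apply]
        simp only [Ecan, Matrix.of_apply, Pi.single_apply, Fin.ext_iff, Fin.val_mk]
        split_ifs <;> (try simp only [and_true] at *) <;>
          first
            | omega | (exfalso; omega) | (norm_num; done)
            | (refine xi_mul_inv ξ hξ _ _ ?_; simp only [Fin.val_mk]; try omega)
            | (rw [neg_mul_neg]; refine xi_mul_inv ξ hξ _ _ ?_; simp only [Fin.val_mk]; try omega)
    · -- row i0 = j - n ∈ [k, k+l)
      by_cases hi0 : (j:ℕ) - n < S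
      · refine ⟨Pi.single ⟨(j:ℕ) - n + S, by omega⟩ 1, ?_⟩
        rw [Matrix.mulVec_single]
        funext j'
        have hj'2 := j'.2
        rw [Pi.smul_apply, Matrix.col_apply, op_smul_eq_mul, sharpR_apply]
        simp only [Ecan, Matrix.of_apply, Pi.single_apply, Fin.ext_iff, Fin.val_mk]
        split_ifs <;> (try simp only [and_true] at *) <;>
          first | omega | (exfalso; omega) | (norm_num; done)
      · refine ⟨Pi.single ⟨(j:ℕ) - n - S, by omega⟩ (-1), ?_⟩
        rw [Matrix.mulVec_single]
        funext j'
        have hj'2 := j'.2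
        rw [Pi.smul_apply, Matrix.col_apply, op_smul_eq_mul, sharpR_apply]
        simp only [Ecan, Matrix.of_apply, Pi.single_apply, Fin.ext_iff, Fin.val_mk]
        split_ifs <;> (try simp only [and_true] at *) <;>
          first | omega | (exfalso; omega) | (norm_num; done)

lemma sharpR_mul {r t s : ℕ} (A : Matrix (Fin (2*r)) (Fin (2*t)) ℝ)
    (B : Matrix (Fin (2*t)) (Fin (2*s)) ℝ) : sharpR (A * B) = sharpR B * sharpR A := by
  have hmid : JR t * (JR t * (Aᵀ * JR r)) = -(Aᵀ * JR r) := by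
    rw [← Matrix.mul_assoc, JR_mul_JR, Matrix.neg_mul, Matrix.one_mul]
  simp only [sharpR, Matrix.transpose_mul, Matrix.neg_mul, Matrix.mul_neg, neg_neg,
    Matrix.mul_assoc]
  rw [hmid]
  simp only [Matrix.mul_neg]

lemma sharpR_symp_inv {p : ℕ} (Z : Matrix (Fin (2*p)) (Fin (2*p)) ℝ)
    (hZ : Z * JR p * Zᵀ = JR p) : sharpR Z⁻¹ = Z := by
  have hZu := isUnit_of_symp Z hZ
  have hZdet : IsUnit Z.det := (Matrix.isUnit_iff_isUnit_det Z).mp hZu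
  have h1 : JR p * Z⁻¹ᵀ = Z * JR p := by
    have h2 : Zᵀ * Zᵀ⁻¹ = 1 :=
      Matrix.mul_nonsing_inv _ (by rw [Matrix.det_transpose]; exact hZdet)
    calc JR p * Z⁻¹ᵀ = (Z * JR p * Zᵀ) * Z⁻¹ᵀ := by rw [hZ]
      _ = (Z * JR p) * (Zᵀ * Zᵀ⁻¹) := by
          rw [Matrix.transpose_nonsing_inv]; simp only [Matrix.mul_assoc]
      _ = Z * JR p := by rw [h2, Matrix.mul_one]
  calc sharpR Z⁻¹ = -(JR p * Z⁻¹ᵀ * JR p) := by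
        simp only [sharpR, Matrix.neg_mul]
    _ = -(Z * JR p * JR p) := by rw [h1]
    _ = Z := by rw [Matrix.mul_assoc, JR_mul_JR]; simp

end Helpers

set_option maxHeartbeats 1000000 in
/-- Suppose the observability matrix factors as `𝒪̃ = Q E Z⁻¹` (`Q` invertible, `Z` real
symplectic, `E` the one-sided symplectic SVD canonical form), and the controllability
matrix satisfies `𝒞̃ = 𝒪̃^♯ T₀` with `T₀` symplectic. After the state transformation
`V = Z⁻¹`, the observability matrix becomes `Q E` and the controllability matrix becomes
`E^♯ Q^♯ T₀`; the unobservable subspace is `Ker E = span{e_{k+l+1},…,e_n,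
e_{n+k+1},…,e_{2n}}` and the controllable subspace is `Im E^♯ = span{e₁,…,e_k,
e_{n+1},…,e_{n+k+l}}`. -/
theorem kalman_structure {n m k l : ℕ} (hkl : k + l ≤ n) (hs : 2*k + l ≤ 2*(2*n*m))
    (ξ : Fin k → ℝ) (hξ : ∀ i, 0 < ξ i)
    (Otil : Matrix (Fin (2*(2*n*m))) (Fin (2*n)) ℝ)
    (Ctil : Matrix (Fin (2*n)) (Fin (2*(2*n*m))) ℝ)
    (Q : Matrix (Fin (2*(2*n*m))) (Fin (2*(2*n*m))) ℝ) (hQ : IsUnit Q)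
    (Z : Matrix (Fin (2*n)) (Fin (2*n)) ℝ) (hZ : Z * JR n * Zᵀ = JR n)
    (T₀ : Matrix (Fin (2*(2*n*m))) (Fin (2*(2*n*m))) ℝ)
    (hT₀ : T₀ * JR (2*n*m) * T₀ᵀ = JR (2*n*m))
    (hO : Otil = Q * Ecan (2*(2*n*m)) n k l ξ * Z⁻¹)
    (hC : Ctil = sharpR Otil * T₀) :
    Otil * Z = Q * Ecan (2*(2*n*m)) n k l ξ ∧
    Z⁻¹ * Ctil = sharpR (Ecan (2*(2*n*m)) n k l ξ) * sharpR Q * T₀ ∧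
    LinearMap.ker (Matrix.toLin' (Q * Ecan (2*(2*n*m)) n k l ξ)) =
      Submodule.span ℝ ((fun i : Fin (2*n) => (Pi.single i 1 : Fin (2*n) → ℝ)) ''
        {i : Fin (2*n) | (k + l ≤ (i : ℕ) ∧ (i : ℕ) < n) ∨ n + k ≤ (i : ℕ)}) ∧
    LinearMap.range (Matrix.toLin'
        (sharpR (Ecan (2*(2*n*m)) n k l ξ) * sharpR Q * T₀)) =
      Submodule.span ℝ ((fun i : Fin (2*n) => (Pi.single i 1 : Fin (2*n) → ℝ)) ''
        {i : Fin (2*n) | (i : ℕ) < k ∨ (n ≤ (i : ℕ) ∧ (i : ℕ) < n + k + l)}) := by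
  have hZu : IsUnit Z := isUnit_of_symp Z hZ
  have hZdet : IsUnit Z.det := (Matrix.isUnit_iff_isUnit_det Z).mp hZu
  have hT₀u : IsUnit T₀ := isUnit_of_symp T₀ hT₀
  have hQdet : IsUnit Q.det := (Matrix.isUnit_iff_isUnit_det Q).mp hQ
  refine ⟨?_, ?_, ?_, ?_⟩
  · rw [hO, Matrix.mul_assoc, Matrix.nonsing_inv_mul Z hZdet, Matrix.mul_one]
  · rw [hC, hO, sharpR_mul (Q * Ecan (2*(2*n*m)) n k l ξ) Z⁻¹, sharpR_mul Q
      (Ecan (2*(2*n*m)) n k l ξ), sharpR_symp_inv Z hZ, ← Matrix.mul_assoc,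
      ← Matrix.mul_assoc, Matrix.nonsing_inv_mul Z hZdet, Matrix.one_mul,
      Matrix.mul_assoc]
  · -- kernel
    rw [Matrix.toLin'_mul, LinearMap.ker_comp]
    have hker : LinearMap.ker (Matrix.toLin' Q) = ⊥ := by
      rw [LinearMap.ker_eq_bot]
      intro x y hxy
      simp only [Matrix.toLin'_apply] at hxy
      have h2 := congrArg (fun w => Q⁻¹.mulVec w) hxy
      simpa [Matrix.mulVec_mulVec, Matrix.nonsing_inv_mul Q hQdet] using h2
    rw [hker, Submodule.comap_bot]
    ext v
    rw [LinearMap.mem_ker, mem_span_single_iff]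
    have hconv : ∀ (w j : Fin (2*n)), (w:ℕ) = (j:ℕ) → v w = 0 → v j = 0 :=
      fun w j hw h => by rwa [Fin.ext hw] at h
    constructor
    · intro hv j hj
      simp only [Set.mem_setOf_eq] at hj
      have hj2 := j.2
      rw [Matrix.toLin'_apply] at hv
      by_cases hc1 : (j:ℕ) < k
      · have h0 := congrFun hv ⟨(j:ℕ), by omega⟩
        simp only [Ecan_mulVec ξ hkl, Fin.val_mk, Pi.zero_apply] at h0
        rw [dif_pos hc1] at h0
        exact hconv _ _ (by simp only [Fin.val_mk]) 
          ((mul_eq_zero.mp h0).resolve_left (ne_of_gt (hξ _)))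
      · by_cases hc2 : (j:ℕ) < k + l
        · have h0 := congrFun hv ⟨(j:ℕ), by omega⟩
          simp only [Ecan_mulVec ξ hkl, Fin.val_mk, Pi.zero_apply] at h0
          rw [dif_neg hc1, dif_pos hc2] at h0
          exact hconv _ _ (by simp only [Fin.val_mk]) h0
        · -- necessarily n ≤ j < n + k
          have hcn : n ≤ (j:ℕ) ∧ (j:ℕ) < n + k := by omega
          have h0 := congrFun hv ⟨k + l + ((j:ℕ) - n), by omega⟩
          simp only [Ecan_mulVec ξ hkl, Fin.val_mk, Pi.zero_apply] at h0
          rw [dif_neg (by omega), dif_neg (by omega), dif_pos (by omega)] at h0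
          exact hconv _ _ (by simp only [Fin.val_mk]; omega)
            ((mul_eq_zero.mp h0).resolve_left (ne_of_gt (hξ _)))
    · intro hv
      rw [Matrix.toLin'_apply]
      funext i
      simp only [Pi.zero_apply]
      rw [Ecan_mulVec ξ hkl]
      have hi2 := i.2
      split_ifs with c1 c2 c3
      · rw [hv _ (by intro hmem; simp only [Set.mem_setOf_eq, Fin.val_mk] at hmem; omega),
          mul_zero]
      · exact hv _ (by intro hmem; simp only [Set.mem_setOf_eq, Fin.val_mk] at hmem; omega)
      · rw [hv _ (by intro hmem; simp only [Set.mem_setOf_eq, Fin.val_mk] at hmem; omega),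
          mul_zero]
      · rfl
  · -- range
    rw [Matrix.mul_assoc, Matrix.toLin'_mul, LinearMap.range_comp]
    have hRu : IsUnit (sharpR Q * T₀) := by
      have hQt : IsUnit Qᵀ := (Matrix.isUnit_iff_isUnit_det _).mpr
        (by rw [Matrix.det_transpose]; exact hQdet)
      have : IsUnit (-(JR (2*n*m)) * Qᵀ * JR (2*n*m) * T₀) :=
        (((isUnit_neg_JR (2*n*m)).mul hQt).mul (isUnit_JR (2*n*m))).mul hT₀u
      simpa only [sharpR] using this
    have hRdet : IsUnit (sharpR Q * T₀).det := (Matrix.isUnit_iff_isUnit_det _).mp hRu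
    have htop : LinearMap.range (Matrix.toLin' (sharpR Q * T₀)) = ⊤ := by
      rw [LinearMap.range_eq_top]
      intro y
      exact ⟨(sharpR Q * T₀)⁻¹.mulVec y, by
        rw [Matrix.toLin'_apply, Matrix.mulVec_mulVec, Matrix.mul_nonsing_inv _ hRdet,
          Matrix.one_mulVec]⟩
    rw [htop, Submodule.map_top]
    apply le_antisymm
    · rintro x ⟨u, rfl⟩
      rw [mem_span_single_iff]
      intro j hj
      simp only [Set.mem_setOf_eq] at hj
      rw [Matrix.toLin'_apply, Matrix.mulVec, dotProduct]
      exact Finset.sum_eq_zero fun c _ => by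
        rw [sharpR_Ecan_row_zero ξ hkl j hj c, zero_mul]
    · rw [Submodule.span_le]
      rintro x ⟨j, hj, rfl⟩
      simp only [Set.mem_setOf_eq] at hj
      obtain ⟨u, hueq⟩ := single_mem_range ξ hξ hkl hs j hj
      exact LinearMap.mem_range.mpr ⟨u, by rw [Matrix.toLin'_apply, hueq]⟩
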